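/- A wa-differentiable function f : C → ℝ on a convex set C is quasiconvex if and only if for all x, y ∈ C, f(y) ≤ f(x) implies Df(x;y) ≤ 0. -/

import Mathlib

open Set Filter Topology

/-- a wa-differentiable `f : C → ℝ` is quasiconvex iff
`f(y) ≤ f(x)` implies `Df(x;y) ≤ 0`, for all `x, y ∈ C`. -/
theorem stmt_12 {X : Type*} [AddCommGroup X] [Module ℝ X]
    (C : Set X) (hC : Convex ℝ C) (f : X → ℝ) (D : X → X → ℝ)
    (hD : ∀ x ∈ C, ∀ y ∈ C,
      Tendsto (fun t : ℝ => (f ((1 - t) • x + t • y) - f x) / t)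
        (𝓝[>] 0) (𝓝 (D x y)))
    (haff : ∀ x ∈ C, ∀ y ∈ C, ∀ z ∈ C, ∀ t ∈ Set.Icc (0:ℝ) 1,
      D x ((1 - t) • y + t • z) = (1 - t) * D x y + t * D x z) :
    (∀ x ∈ C, ∀ y ∈ C, ∀ t ∈ Set.Ioo (0:ℝ) 1,
        f (t • x + (1 - t) • y) ≤ max (f x) (f y)) ↔
      (∀ x ∈ C, ∀ y ∈ C, f y ≤ f x → D x y ≤ 0) := by
  constructor
  · -- quasiconvex → derivative condition
    intro hqc x hx y hy hfyx
    refine le_of_tendsto (hD x hx y hy) ?_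
    filter_upwards [Ioo_mem_nhdsGT_of_mem (Set.mem_Ico.mpr ⟨le_refl (0:ℝ), one_pos⟩)]
      with u hu
    have hu1 : (1 : ℝ) - u ∈ Set.Ioo (0:ℝ) 1 := ⟨by linarith [hu.2], by linarith [hu.1]⟩
    have h := hqc x hx y hy (1 - u) hu1
    have heq : (1 - u) • x + (1 - (1 - u)) • y = (1 - u) • x + u • y := by ring_nf
    rw [heq] at h
    have : f ((1 - u) • x + u • y) ≤ f x := le_trans h (by simp [max_eq_left hfyx])
    exact div_nonpos_of_nonpos_of_nonneg (by linarith) hu.1.le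
  · -- derivative condition → quasiconvex
    intro hmono x hx y hy t ht
    set s₀ : ℝ := 1 - t with hs₀
    have hs₀mem : s₀ ∈ Set.Ioo (0:ℝ) 1 := ⟨by simp [hs₀]; linarith [ht.2], by simp [hs₀]; linarith [ht.1]⟩
    set p : ℝ → X := fun s => (1 - s) • x + s • y with hp
    set φ : ℝ → ℝ := fun s => f (p s) with hφ
    have hgoal : t • x + (1 - t) • y = p s₀ := by
      rw [hp]; simp only; rw [hs₀]; module
    rw [hgoal]
    set M := max (f x) (f y) with hM
    show φ s₀ ≤ M
    by_contra hcon
    push_neg at hcon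
    have hpmem : ∀ s ∈ Set.Icc (0:ℝ) 1, p s ∈ C := by
      intro s hs
      exact hC hx hy (by linarith [hs.2]) hs.1 (by ring)
    have hp0 : φ 0 = f x := by simp [hφ, hp]
    -- limits toward y
    have hDy : ∀ s ∈ Set.Icc (0:ℝ) 1,
        Tendsto (fun u : ℝ => (φ (s + u * (1 - s)) - φ s) / u) (𝓝[>] 0)
          (𝓝 (D (p s) y)) := by
      intro s hs
      have h := hD (p s) (hpmem s hs) y hy
      have hcomp : ∀ u : ℝ, (1 - u) • p s + u • y = p (s + u * (1 - s)) := by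
        intro u; rw [hp]; simp only; module
      simpa only [hcomp] using h
    -- limits toward x
    have hDx : ∀ s ∈ Set.Icc (0:ℝ) 1,
        Tendsto (fun u : ℝ => (φ (s - u * s) - φ s) / u) (𝓝[>] 0)
          (𝓝 (D (p s) x)) := by
      intro s hs
      have h := hD (p s) (hpmem s hs) x hx
      have hcomp : ∀ u : ℝ, (1 - u) • p s + u • x = p (s - u * s) := by
        intro u; rw [hp]; simp only; module
      simpa only [hcomp] using h
    -- D (p s) (p s) = 0
    have hDself : ∀ s ∈ Set.Icc (0:ℝ) 1, D (p s) (p s) = 0 := by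
      intro s hs
      have h := hD (p s) (hpmem s hs) (p s) (hpmem s hs)
      have heq : (fun u : ℝ => (f ((1 - u) • p s + u • p s) - f (p s)) / u)
          = fun _ : ℝ => (0 : ℝ) := by
        funext u
        rw [← add_smul]
        simp
      rw [heq] at h
      exact tendsto_nhds_unique h tendsto_const_nhds
    have haffs : ∀ s ∈ Set.Icc (0:ℝ) 1,
        (1 - s) * D (p s) x + s * D (p s) y = 0 := by
      intro s hs
      have h := haff (p s) (hpmem s hs) x hx y hy s hs
      have : (1 - s) • x + s • y = p s := by rw [hp]
      rw [this, hDself s hs] at h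
      linarith
    have hmapdiv : ∀ c : ℝ, 0 < c →
        Tendsto (fun u : ℝ => u / c) (𝓝[>] (0:ℝ)) (𝓝[>] (0:ℝ)) := by
      intro c hc
      rw [tendsto_nhdsWithin_iff]
      constructor
      · have h0 : Tendsto (fun u : ℝ => u / c) (𝓝 (0:ℝ)) (𝓝 ((0:ℝ) / c)) :=
          tendsto_id.div_const c
        rw [zero_div] at h0
        exact h0.mono_left nhdsWithin_le_nhds
      · filter_upwards [self_mem_nhdsWithin] with u hu
        exact div_pos hu hc
    have hmapsub : ∀ s : ℝ, Tendsto (fun z : ℝ => z - s) (𝓝[>] s) (𝓝[>] (0:ℝ)) := by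
      intro s
      rw [tendsto_nhdsWithin_iff]
      constructor
      · have h0 : Tendsto (fun z : ℝ => z - s) (𝓝 s) (𝓝 (s - s)) :=
          tendsto_id.sub_const s
        rw [sub_self] at h0
        exact h0.mono_left nhdsWithin_le_nhds
      · filter_upwards [self_mem_nhdsWithin] with z hz
        exact sub_pos.mpr (Set.mem_Ioi.mp hz)
    have hmapsub' : ∀ s : ℝ, Tendsto (fun z : ℝ => s - z) (𝓝[<] s) (𝓝[>] (0:ℝ)) := by
      intro s
      rw [tendsto_nhdsWithin_iff]
      constructor
      · have h0 : Tendsto (fun z : ℝ => s - z) (𝓝 s) (𝓝 (s - s)) :=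
          tendsto_const_nhds.sub tendsto_id
        rw [sub_self] at h0
        exact h0.mono_left nhdsWithin_le_nhds
      · filter_upwards [self_mem_nhdsWithin] with z hz
        exact sub_pos.mpr (Set.mem_Iio.mp hz)
    -- right slope limit
    have hSR : ∀ s ∈ Set.Ico (0:ℝ) 1,
        Tendsto (slope φ s) (𝓝[>] s) (𝓝 (D (p s) y / (1 - s))) := by
      intro s hs
      have h1s : (0:ℝ) < 1 - s := by linarith [hs.2]
      have step1 : Tendsto (fun u : ℝ => (φ (s + u) - φ s) / u) (𝓝[>] (0:ℝ))
          (𝓝 (D (p s) y / (1 - s))) := by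
        have h := ((hDy s ⟨hs.1, hs.2.le⟩).comp (hmapdiv (1 - s) h1s)).div_const (1 - s)
        refine h.congr' ?_
        filter_upwards [self_mem_nhdsWithin] with u hu
        have hu0 : u ≠ 0 := ne_of_gt hu
        simp only [Function.comp_apply]
        rw [div_mul_cancel₀ _ (ne_of_gt h1s), div_div,
          div_mul_cancel₀ _ (ne_of_gt h1s)]
      have := step1.comp (hmapsub s)
      refine this.congr ?_
      intro z
      simp only [Function.comp_apply]
      have hzz : s + (z - s) = z := by ring
      rw [hzz, slope_def_field]
    -- left slope limit
    have hSL : ∀ s ∈ Set.Ioc (0:ℝ) 1,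
        Tendsto (slope φ s) (𝓝[<] s) (𝓝 (-(D (p s) x) / s)) := by
      intro s hs
      have hspos : (0:ℝ) < s := hs.1
      have step1 : Tendsto (fun u : ℝ => (φ (s - u) - φ s) / u) (𝓝[>] (0:ℝ))
          (𝓝 (D (p s) x / s)) := by
        have h := ((hDx s ⟨hs.1.le, hs.2⟩).comp (hmapdiv s hspos)).div_const s
        refine h.congr' ?_
        filter_upwards [self_mem_nhdsWithin] with u hu
        have hu0 : u ≠ 0 := ne_of_gt hu
        simp only [Function.comp_apply]
        rw [div_mul_cancel₀ _ (ne_of_gt hspos), div_div,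
          div_mul_cancel₀ _ (ne_of_gt hspos)]
      have h2 := (step1.comp (hmapsub' s)).neg
      rw [← neg_div] at h2
      refine h2.congr ?_
      intro z
      simp only [Function.comp_apply]
      have hzz : s - (s - z) = z := by ring
      rw [hzz, slope_def_field]
      rw [show z - s = -(s - z) by ring, div_neg]
    -- one-sided continuity
    have hcR : ∀ s ∈ Set.Ico (0:ℝ) 1, Tendsto φ (𝓝[>] s) (𝓝 (φ s)) := by
      intro s hs
      have h := (hSR s hs).mul ((hmapsub s).mono_right nhdsWithin_le_nhds)
      rw [mul_zero] at h
      have h2 : Tendsto (fun z => φ s + slope φ s z * (z - s)) (𝓝[>] s) (𝓝 (φ s)) := by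
        simpa using tendsto_const_nhds.add h
      refine h2.congr' ?_
      filter_upwards [self_mem_nhdsWithin] with z hz
      rw [slope_def_field, div_mul_cancel₀ _ (sub_ne_zero.mpr (ne_of_gt hz))]
      ring
    have hcL : ∀ s ∈ Set.Ioc (0:ℝ) 1, Tendsto φ (𝓝[<] s) (𝓝 (φ s)) := by
      intro s hs
      have hz0 : Tendsto (fun z : ℝ => z - s) (𝓝[<] s) (𝓝 0) := by
        have h0 : Tendsto (fun z : ℝ => z - s) (𝓝 s) (𝓝 (s - s)) :=
          tendsto_id.sub_const s
        rw [sub_self] at h0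
        exact h0.mono_left nhdsWithin_le_nhds
      have h := (hSL s hs).mul hz0
      rw [mul_zero] at h
      have h2 : Tendsto (fun z => φ s + slope φ s z * (z - s)) (𝓝[<] s) (𝓝 (φ s)) := by
        simpa using tendsto_const_nhds.add h
      refine h2.congr' ?_
      filter_upwards [self_mem_nhdsWithin] with z hz
      rw [slope_def_field, div_mul_cancel₀ _ (sub_ne_zero.mpr (ne_of_lt hz))]
      ring
    -- continuity on Icc 0 1
    have hcont : ContinuousOn φ (Set.Icc 0 1) := by
      intro s hs
      have hsub : Set.Icc (0:ℝ) 1 ⊆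
          (Set.Icc (0:ℝ) 1 ∩ Set.Iio s) ∪ ({s} ∪ (Set.Icc (0:ℝ) 1 ∩ Set.Ioi s)) := by
        intro z hz
        rcases lt_trichotomy z s with h | h | h
        · exact Or.inl ⟨hz, h⟩
        · exact Or.inr (Or.inl h)
        · exact Or.inr (Or.inr ⟨hz, h⟩)
      have hle : 𝓝[Set.Icc (0:ℝ) 1] s ≤
          𝓝[Set.Icc (0:ℝ) 1 ∩ Set.Iio s] s ⊔ (𝓝[{s}] s ⊔ 𝓝[Set.Icc (0:ℝ) 1 ∩ Set.Ioi s] s) := by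
        rw [← nhdsWithin_union, ← nhdsWithin_union]
        exact nhdsWithin_mono _ hsub
      refine Tendsto.mono_left ?_ hle
      rw [tendsto_sup, tendsto_sup]
      refine ⟨?_, ?_, ?_⟩
      · rcases eq_or_lt_of_le hs.1 with h0 | h0
        · have : Set.Icc (0:ℝ) 1 ∩ Set.Iio s = ∅ := by
            ext z; simp only [Set.mem_inter_iff, Set.mem_Icc, Set.mem_Iio, Set.mem_empty_iff_false,
              iff_false, not_and, and_imp]
            intro hz _ ; rw [← h0]; linarith
          rw [this, nhdsWithin_empty]
          exact tendsto_bot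
        · exact (hcL s ⟨h0, hs.2⟩).mono_left (nhdsWithin_mono _ Set.inter_subset_right)
      · rw [nhdsWithin_singleton]
        exact tendsto_pure_nhds φ s
      · rcases eq_or_lt_of_le hs.2 with h1 | h1
        · have : Set.Icc (0:ℝ) 1 ∩ Set.Ioi s = ∅ := by
            ext z; simp only [Set.mem_inter_iff, Set.mem_Icc, Set.mem_Ioi, Set.mem_empty_iff_false,
              iff_false, not_and, and_imp]
            intro _ hz; rw [h1]; linarith
          rw [this, nhdsWithin_empty]
          exact tendsto_bot
        · exact (hcR s ⟨hs.1, h1⟩).mono_left (nhdsWithin_mono _ Set.inter_subset_right)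
    -- derivative at interior points
    have hder : ∀ z ∈ Set.Ioo (0:ℝ) 1, HasDerivAt φ (D (p z) y / (1 - z)) z := by
      intro z hz
      have hz1 : (0:ℝ) < 1 - z := by linarith [hz.2]
      have hR := hSR z ⟨hz.1.le, hz.2⟩
      have hLs := hSL z ⟨hz.1, hz.2.le⟩
      have haffz := haffs z ⟨hz.1.le, hz.2.le⟩
      have hval : -(D (p z) x) / z = D (p z) y / (1 - z) := by
        have hzne : z ≠ 0 := ne_of_gt hz.1
        have hz1ne : (1 : ℝ) - z ≠ 0 := ne_of_gt hz1
        field_simp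
        linarith [haffz]
      rw [hval] at hLs
      rw [hasDerivAt_iff_tendsto_slope, ← nhdsLT_sup_nhdsGT, tendsto_sup]
      exact ⟨hLs, hR⟩
    -- the sup argument
    set S := {s : ℝ | s ∈ Set.Icc 0 s₀ ∧ φ s ≤ M} with hSdef
    have h0S : (0:ℝ) ∈ S := ⟨⟨le_refl 0, hs₀mem.1.le⟩, by rw [hp0]; exact le_max_left _ _⟩
    have hbdd : BddAbove S := ⟨s₀, fun s hs => hs.1.2⟩
    set c := sSup S with hcdef
    have hc0 : 0 ≤ c := le_csSup hbdd h0S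
    have hcs₀ : c ≤ s₀ := csSup_le ⟨0, h0S⟩ (fun s hs => hs.1.2)
    have hφc : φ c ≤ M := by
      by_contra hφc
      push_neg at hφc
      have hcpos : 0 < c := by
        rcases eq_or_lt_of_le hc0 with h | h
        · exfalso; rw [← h] at hφc; rw [hp0] at hφc
          exact absurd (le_max_left (f x) (f y)) (not_le.mpr hφc)
        · exact h
      have hev : ∀ᶠ z in 𝓝[<] c, M < φ z :=
        (hcL c ⟨hcpos, hcs₀.trans hs₀mem.2.le⟩).eventually (eventually_gt_nhds hφc)
      obtain ⟨b, hb, hsub⟩ := (mem_nhdsLT_iff_exists_Ioo_subset' (by linarith : c - 1 < c)).mp hev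
      obtain ⟨u, huS, hbu⟩ := exists_lt_of_lt_csSup ⟨0, h0S⟩ hb
      have huc : u ≤ c := le_csSup hbdd huS
      have hult : u < c := lt_of_le_of_ne huc (by
        intro h; rw [h] at huS; exact absurd huS.2 (not_le.mpr hφc))
      exact absurd huS.2 (not_le.mpr (hsub ⟨hbu, hult⟩))
    have hcs₀' : c < s₀ := lt_of_le_of_ne hcs₀ (by
      intro h; rw [h] at hφc; linarith)
    have hanti : AntitoneOn φ (Set.Icc c s₀) := by
      have hIccsub : Set.Icc c s₀ ⊆ Set.Icc (0:ℝ) 1 :=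
        Set.Icc_subset_Icc hc0 hs₀mem.2.le
      have hIoo : Set.Ioo c s₀ ⊆ Set.Ioo (0:ℝ) 1 := fun z hz =>
        ⟨lt_of_le_of_lt hc0 hz.1, lt_trans hz.2 hs₀mem.2⟩
      refine antitoneOn_of_deriv_nonpos (convex_Icc c s₀) (hcont.mono hIccsub) ?_ ?_
      · rw [interior_Icc]
        intro z hz
        exact ((hder z (hIoo hz)).differentiableAt).differentiableWithinAt
      · rw [interior_Icc]
        intro z hz
        have hzI := hIoo hz
        have hzS : ¬ z ∈ S := fun h => absurd (le_csSup hbdd h) (not_le.mpr hz.1)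
        have hzM : M < φ z := by
          by_contra h
          push_neg at h
          exact hzS ⟨⟨hzI.1.le, hz.2.le⟩, h⟩
        have hfy : f y ≤ f (p z) := le_trans (le_max_right (f x) (f y)) hzM.le
        have hDz : D (p z) y ≤ 0 := hmono (p z) (hpmem z ⟨hzI.1.le, hzI.2.le⟩) y hy hfy
        rw [(hder z hzI).deriv]
        exact div_nonpos_of_nonpos_of_nonneg hDz (by linarith [hzI.2])
    have := hanti (Set.mem_Icc.mpr ⟨le_refl c, hcs₀⟩) (Set.mem_Icc.mpr ⟨hcs₀, le_refl s₀⟩) hcs₀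
    linarith
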